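/- Let n > 2, and let k be odd with 2^r < k < 2^{r+1} and k < 2^n. Then the Proth numerical semigroup P_k(n) = ⟨{k·2^{n+i} + 1 : i ∈ ℕ}⟩ is generated by the finite set {k·2^{n+i} + 1 : 0 ≤ i ≤ n + r}. -/

import Mathlib

/-- Binary representation: any `Q < 2^E` is a sum of at most `E` powers of two,
each with exponent `< E`. -/
lemma proth_bin (E : ℕ) : ∀ Q, Q < 2 ^ E → ∃ M : Multiset ℕ,
    (∀ x ∈ M, x < E) ∧ M.card ≤ E ∧ (M.map (2 ^ ·)).sum = Q := by
  induction E with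
  | zero =>
    intro Q hQ
    interval_cases Q
    exact ⟨0, by simp, by simp, by simp⟩
  | succ e ih =>
    intro Q hQ
    by_cases h : Q < 2 ^ e
    · obtain ⟨M, h1, h2, h3⟩ := ih Q h
      exact ⟨M, fun x hx => (h1 x hx).trans (Nat.lt_succ_self e), h2.trans (Nat.le_succ e), h3⟩
    · push_neg at h
      have h' : Q - 2 ^ e < 2 ^ e := by
        have : 2 ^ (e + 1) = 2 ^ e + 2 ^ e := by ring
        omega
      obtain ⟨M, h1, h2, h3⟩ := ih (Q - 2 ^ e) h'
      refine ⟨e ::ₘ M, ?_, ?_, ?_⟩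
      · intro x hx
        rcases Multiset.mem_cons.mp hx with rfl | hx
        · omega
        · have := h1 x hx
          omega
      · simpa using Nat.succ_le_succ h2
      · rw [Multiset.map_cons, Multiset.sum_cons, h3]
        omega

/-- Splitting: a sum of powers of two with exponents `≤ E` can be rewritten with
any larger number of summands, as long as that number does not exceed the total sum. -/
lemma proth_split (E t : ℕ) : ∀ (M : Multiset ℕ), (∀ x ∈ M, x ≤ E) →
    M.card + t ≤ (M.map (2 ^ ·)).sum → ∃ M' : Multiset ℕ,
      (∀ x ∈ M', x ≤ E) ∧ M'.card = M.card + t ∧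
        (M'.map (2 ^ ·)).sum = (M.map (2 ^ ·)).sum := by
  induction t with
  | zero => intro M hM _; exact ⟨M, hM, by simp, rfl⟩
  | succ t ih =>
    intro M hM hle
    -- there must be an element `x ≥ 1` in `M`
    have hx : ∃ x ∈ M, x ≠ 0 := by
      by_contra hall
      push_neg at hall
      have : (M.map (2 ^ ·)).sum = M.card := by
        have : M.map (2 ^ ·) = M.map (fun _ => 1) := by
          apply Multiset.map_congr rfl
          intro x hx
          simp [hall x hx]
        rw [this, Multiset.map_const', Multiset.sum_replicate, smul_eq_mul, mul_one]
      omega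
    obtain ⟨x, hxM, hx0⟩ := hx
    obtain ⟨y, rfl⟩ : ∃ y, x = y + 1 := ⟨x - 1, by omega⟩
    set M₁ : Multiset ℕ := y ::ₘ y ::ₘ M.erase (y + 1) with hM₁
    have hcons : M = (y + 1) ::ₘ M.erase (y + 1) := (Multiset.cons_erase hxM).symm
    have hsum : (M₁.map (2 ^ ·)).sum = (M.map (2 ^ ·)).sum := by
      conv_rhs => rw [hcons]
      rw [hM₁]
      simp only [Multiset.map_cons, Multiset.sum_cons]
      have : 2 ^ (y + 1) = 2 ^ y + 2 ^ y := by rw [pow_succ]; ring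
      omega
    have hcard : M₁.card = M.card + 1 := by
      conv_rhs => rw [hcons]
      rw [hM₁]; simp
    have hexp : ∀ z ∈ M₁, z ≤ E := by
      intro z hz
      rw [hM₁] at hz
      have hyE : y + 1 ≤ E := hM _ hxM
      rcases Multiset.mem_cons.mp hz with rfl | hz
      · omega
      rcases Multiset.mem_cons.mp hz with rfl | hz
      · omega
      · exact hM z (Multiset.mem_of_mem_erase hz)
    obtain ⟨M', h1, h2, h3⟩ := ih M₁ hexp (by omega)
    exact ⟨M', h1, by omega, by rw [h3, hsum]⟩

/-- Representation: if `Q / 2^E + E ≤ A ≤ Q`, then `Q` is a sum of exactly `A`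
powers of two, each with exponent `≤ E`. -/
lemma proth_rep (E Q A : ℕ) (h1 : Q / 2 ^ E + E ≤ A) (h2 : A ≤ Q) :
    ∃ M : Multiset ℕ, (∀ x ∈ M, x ≤ E) ∧ M.card = A ∧ (M.map (2 ^ ·)).sum = Q := by
  obtain ⟨M₁, hb1, hb2, hb3⟩ := proth_bin E (Q % 2 ^ E) (Nat.mod_lt _ (Nat.pow_pos (n := E) (by norm_num)))
  set M₀ : Multiset ℕ := Multiset.replicate (Q / 2 ^ E) E + M₁ with hM₀
  have hsum0 : (M₀.map (2 ^ ·)).sum = Q := by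
    rw [hM₀, Multiset.map_add, Multiset.sum_add, Multiset.map_replicate,
      Multiset.sum_replicate, hb3, smul_eq_mul]
    rw [mul_comm]
    exact Nat.div_add_mod Q (2 ^ E)
  have hcard0 : M₀.card = Q / 2 ^ E + M₁.card := by
    rw [hM₀]; simp
  have hexp0 : ∀ x ∈ M₀, x ≤ E := by
    intro x hx
    rcases Multiset.mem_add.mp hx with hx | hx
    · exact le_of_eq (Multiset.eq_of_mem_replicate hx)
    · exact le_of_lt (hb1 x hx)
  obtain ⟨M', hh1, hh2, hh3⟩ := proth_split E (A - M₀.card) M₀ hexp0 (by omega)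
  exact ⟨M', hh1, by omega, by rw [hh3, hsum0]⟩

theorem proth_finitely_generated (n k r : ℕ) (hn : 2 < n) (hk : Odd k)
    (hklt : k < 2 ^ n) (hr1 : 2 ^ r < k) (hr2 : k < 2 ^ (r + 1)) :
    AddSubmonoid.closure {m : ℕ | ∃ i : ℕ, m = k * 2 ^ (n + i) + 1} =
      AddSubmonoid.closure {m : ℕ | ∃ i : ℕ, i ≤ n + r ∧ m = k * 2 ^ (n + i) + 1} := by
  apply le_antisymm
  swap
  · apply AddSubmonoid.closure_mono
    rintro m ⟨i, _, rfl⟩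
    exact ⟨i, rfl⟩
  -- basic facts
  have hk3 : 3 ≤ k := by
    obtain ⟨m, hm⟩ := hk
    have h1 : 1 ≤ 2 ^ r := Nat.one_le_two_pow
    omega
  have hrn : r < n := by
    have : 2 ^ r < 2 ^ n := lt_trans hr1 hklt
    exact (Nat.pow_lt_pow_iff_right (by norm_num)).mp this
  apply AddSubmonoid.closure_le.mpr
  rintro m ⟨i, rfl⟩
  by_cases hi : i ≤ n + r
  · exact AddSubmonoid.subset_closure ⟨i, hi, rfl⟩
  · push_neg at hi
    set u := i - (n + r + 1) with hu
    have hiu : i = n + r + 1 + u := by omega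
    obtain ⟨P, hP⟩ : ∃ P, P + 1 = 2 ^ (n + r + 1) :=
      ⟨2 ^ (n + r + 1) - 1, by have : 1 ≤ 2 ^ (n + r + 1) := Nat.one_le_two_pow; omega⟩
    set A := 1 + k * 2 ^ (n + u) with hA
    set Q := 2 ^ u * P with hQ
    -- inequalities needed for the representation lemma
    have hAQ : A ≤ Q := by
      have hk1 : (k + 1) * 2 ^ (n + u) ≤ 2 ^ (r + 1) * 2 ^ (n + u) :=
        Nat.mul_le_mul_right _ (by omega)
      have he : 2 ^ (r + 1) * 2 ^ (n + u) = 2 ^ u * (P + 1) := by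
        rw [hP, ← pow_add, ← pow_add]; ring_nf
      have hun : 2 ^ u + 1 ≤ 2 ^ (n + u) := by
        have h2 : 2 ^ (u + 1) ≤ 2 ^ (n + u) := Nat.pow_le_pow_right (by norm_num) (by omega)
        have : 2 ^ (u + 1) = 2 ^ u + 2 ^ u := by ring
        have h1 : 1 ≤ 2 ^ u := Nat.one_le_two_pow
        omega
      have hexpand : (k + 1) * 2 ^ (n + u) = k * 2 ^ (n + u) + 2 ^ (n + u) := by ring
      have hexpand2 : 2 ^ u * (P + 1) = 2 ^ u * P + 2 ^ u := by ring
      omega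
    have hdiv : Q / 2 ^ (n + r) + (n + r) ≤ A := by
      have hq : Q / 2 ^ (n + r) < 2 ^ (u + 1) := by
        apply Nat.div_lt_of_lt_mul
        calc Q < 2 ^ u * (P + 1) := by
                have h1 : 1 ≤ 2 ^ u := Nat.one_le_two_pow
                rw [hQ]; nlinarith
          _ = 2 ^ (n + r) * 2 ^ (u + 1) := by rw [hP, ← pow_add, ← pow_add]; ring_nf
      have hab : 2 ^ (u + 1) ≤ 2 ^ (n + u) := Nat.pow_le_pow_right (by norm_num) (by omega)
      have hnr : n + r < 2 ^ (n + u) := by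
        have h1 : n + r ≤ 2 * n - 1 := by omega
        have h2 : n < 2 ^ n := (Nat.lt_two_pow_self (n := n))
        have h3 : 2 ^ n ≤ 2 ^ (n + u) := Nat.pow_le_pow_right (by norm_num) (by omega)
        have h4 : n - 1 < 2 ^ (n - 1) := (Nat.lt_two_pow_self (n := n - 1))
        have h5 : 2 ^ n = 2 * 2 ^ (n - 1) := by
          rw [← pow_succ']
          congr 1
          omega
        omega
      have hkk : 3 * 2 ^ (n + u) ≤ k * 2 ^ (n + u) := Nat.mul_le_mul_right _ hk3
      omega
    obtain ⟨M, hM1, hM2, hM3⟩ := proth_rep (n + r) Q A hdiv hAQ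
    -- now build the element as a sum of generators
    have hmem : (M.map (fun x => k * 2 ^ (n + x) + 1)).sum ∈
        AddSubmonoid.closure {m : ℕ | ∃ i : ℕ, i ≤ n + r ∧ m = k * 2 ^ (n + i) + 1} := by
      apply multiset_sum_mem
      intro a ha
      obtain ⟨x, hx, rfl⟩ := Multiset.mem_map.mp ha
      exact AddSubmonoid.subset_closure ⟨x, hM1 x hx, rfl⟩
    have hval : (M.map (fun x => k * 2 ^ (n + x) + 1)).sum = k * 2 ^ (n + i) + 1 := by
      have step1 : (M.map (fun x => k * 2 ^ (n + x) + 1)).sum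
          = (M.map (fun x => k * 2 ^ n * 2 ^ x)).sum + (M.map (fun _ => 1)).sum := by
        rw [← Multiset.sum_map_add]
        apply congrArg
        apply Multiset.map_congr rfl
        intro x _
        rw [pow_add]
        ring
      rw [step1]
      have step2 : (M.map (fun x => k * 2 ^ n * 2 ^ x)).sum
          = k * 2 ^ n * (M.map (2 ^ ·)).sum := by
        rw [← Multiset.sum_map_mul_left]
      have step3 : (M.map (fun _ : ℕ => (1 : ℕ))).sum = M.card := by
        rw [Multiset.map_const', Multiset.sum_replicate, smul_eq_mul, mul_one]
      rw [step2, step3, hM3, hM2, hA, hQ, hiu]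
      have : k * 2 ^ n * (2 ^ u * P) + (1 + k * 2 ^ (n + u))
          = k * 2 ^ (n + u) * (P + 1) + 1 := by
        rw [pow_add]; ring
      rw [this, hP]
      have he : n + (n + r + 1 + u) = (n + u) + (n + r + 1) := by omega
      rw [he, pow_add]
      ring
    rw [← hval]
    exact hmem
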